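/- In the 2D example with γ₁ = 2/3, γ₂ = 1/3, λ₁ = λ₂ = 1/2, for any 0 < α < 1 and sufficiently large initialization magnitude M (depending on α and with 0 < ε < 1), gradient flow from 0 stopped at train loss ε achieves population loss at least (3/2)ε(1-α). -/
import Mathlib


/-- in the 2D example, for any 0 < α < 1 and sufficiently large M,
gradient flow from 0 stopped at train loss ε (0 < ε < 1) has population loss at
least (3/2)ε(1-α). -/
theorem gradient_flow_2d_lower (α : ℝ) (hα0 : 0 < α) (hα1 : α < 1) :
    ∃ M0 : ℝ, 0 < M0 ∧ ∀ M ≥ M0, ∀ ε : ℝ, 0 < ε → ε < 1 → ∀ T ≥ (0:ℝ),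
      (2/3) * (M * Real.exp (-4 * T / 3))^2 +
        (1/3) * (M * Real.exp (-2 * T / 3))^2 = ε →
      (1/2) * (M * Real.exp (-4 * T / 3))^2 +
        (1/2) * (M * Real.exp (-2 * T / 3))^2 ≥ (3/2) * ε * (1 - α) := by
  refine ⟨Real.sqrt (3 / α), Real.sqrt_pos.mpr (by positivity), ?_⟩
  intro M hM ε hε0 hε1 T hT h
  have hu : Real.exp (-4 * T / 3) = Real.exp (-2 * T / 3) ^ 2 := by
    rw [sq, ← Real.exp_add]; ring_nf
  set u := Real.exp (-2 * T / 3) with hudef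
  have hu0 : 0 < u := Real.exp_pos _
  have hu1 : u ≤ 1 := Real.exp_le_one_iff.mpr (by linarith)
  have hM0 : (0:ℝ) ≤ Real.sqrt (3 / α) := Real.sqrt_nonneg _
  have hMsq : 3 / α ≤ M ^ 2 := by
    have := Real.sq_sqrt (le_of_lt (by positivity : (0:ℝ) < 3 / α))
    nlinarith [pow_le_pow_left₀ hM0 hM 2]
  have hαM : 3 ≤ α * M ^ 2 := by
    rw [div_le_iff₀ hα0] at hMsq; linarith
  rw [hu] at h ⊢
  -- A = M^2 u^4, B = M^2 u^2
  have hB3 : M ^ 2 * u ^ 2 ≤ 3 := by nlinarith [sq_nonneg (M * u ^ 2), sq_nonneg (M * u)]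
  have hAB : M ^ 2 * u ^ 4 ≤ α * (M ^ 2 * u ^ 2) := by
    nlinarith [sq_nonneg (M * u), sq_nonneg u, sq_nonneg M]
  nlinarith [sq_nonneg (M * u ^ 2), sq_nonneg (M * u)]
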